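/- Let A and B be square complex matrices over nonempty finite index types. Then the trace norm of their Kronecker product satisfies ‖A ⊗ₖ B‖₁ = ‖A‖₁ · ‖B‖₁. -/

import Mathlib

open Matrix BigOperators Kronecker
open scoped ComplexOrder

/-- The trace norm of a square complex matrix: the trace of the positive semidefinite
square root of `Aᴴ * A`. -/
noncomputable def traceNorm {α : Type*} [Fintype α] [DecidableEq α]
    (A : Matrix α α ℂ) : ℝ :=
  (((Matrix.posSemidef_conjTranspose_mul_self A).1.eigenvectorUnitary.1 *
      diagonal (((↑) : ℝ → ℂ) ∘ (√·) ∘ (Matrix.posSemidef_conjTranspose_mul_self A).1.eigenvalues) *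
      (star (Matrix.posSemidef_conjTranspose_mul_self A).1.eigenvectorUnitary : Matrix α α ℂ)).trace).re

open scoped MatrixOrder

lemma traceNorm_eq_sqrt {α : Type*} [Fintype α] [DecidableEq α] (A : Matrix α α ℂ) :
    traceNorm A = (CFC.sqrt (Aᴴ * A)).trace.re := by
  have hA := Matrix.posSemidef_conjTranspose_mul_self A
  have h0 : 0 ≤ Aᴴ * A := Matrix.nonneg_iff_posSemidef.mpr hA
  rw [traceNorm, CFC.sqrt_eq_cfc, cfc_nnreal_eq_real _ (Aᴴ * A) h0, hA.1.cfc_eq,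
    IsHermitian.cfc, Unitary.conjStarAlgAut_apply]
  congr 4
  funext i
  congr 2
  funext k
  simp [Real.coe_sqrt, Real.coe_toNNReal', hA.eigenvalues_nonneg k]

lemma conjTranspose_kron {α β : Type*} (A : Matrix α α ℂ) (B : Matrix β β ℂ) :
    (A ⊗ₖ B)ᴴ = Aᴴ ⊗ₖ Bᴴ := by
  ext ⟨i, j⟩ ⟨k, l⟩
  simp [Matrix.conjTranspose_apply]

lemma posSemidef_kron {α β : Type*} [Fintype α] [Fintype β] [DecidableEq α] [DecidableEq β]
    {P : Matrix α α ℂ} {Q : Matrix β β ℂ} (hP : P.PosSemidef) (hQ : Q.PosSemidef) :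
    (P ⊗ₖ Q).PosSemidef := by
  exact hP.kronecker hQ

lemma im_trace_eq_zero {α : Type*} [Fintype α] {P : Matrix α α ℂ}
    (hP : P.IsHermitian) : P.trace.im = 0 := by
  have h : star P.trace = P.trace := by
    rw [← Matrix.trace_conjTranspose, hP.eq]
  simpa [Complex.conj_eq_iff_im] using h

theorem stmt2 {α β : Type*} [Fintype α] [Fintype β] [DecidableEq α] [DecidableEq β]
    [Nonempty α] [Nonempty β] (A : Matrix α α ℂ) (B : Matrix β β ℂ) :
    traceNorm (A ⊗ₖ B) = traceNorm A * traceNorm B := by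
  set hP := Matrix.posSemidef_conjTranspose_mul_self A
  set hQ := Matrix.posSemidef_conjTranspose_mul_self B
  have hPs : (CFC.sqrt (Aᴴ * A)).PosSemidef :=
    Matrix.nonneg_iff_posSemidef.mp (CFC.sqrt_nonneg _)
  have hQs : (CFC.sqrt (Bᴴ * B)).PosSemidef :=
    Matrix.nonneg_iff_posSemidef.mp (CFC.sqrt_nonneg _)
  have hkron := posSemidef_kron hPs hQs
  have hsq : (CFC.sqrt (Aᴴ * A) ⊗ₖ CFC.sqrt (Bᴴ * B)) * (CFC.sqrt (Aᴴ * A) ⊗ₖ CFC.sqrt (Bᴴ * B))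
      = (A ⊗ₖ B)ᴴ * (A ⊗ₖ B) := by
    rw [← Matrix.mul_kronecker_mul, CFC.sqrt_mul_sqrt_self _ (Matrix.nonneg_iff_posSemidef.mpr hP),
      CFC.sqrt_mul_sqrt_self _ (Matrix.nonneg_iff_posSemidef.mpr hQ),
      conjTranspose_kron, ← Matrix.mul_kronecker_mul]
  have key : CFC.sqrt ((A ⊗ₖ B)ᴴ * (A ⊗ₖ B))
      = CFC.sqrt (Aᴴ * A) ⊗ₖ CFC.sqrt (Bᴴ * B) :=
    (CFC.sqrt_eq_iff _ _
      (Matrix.nonneg_iff_posSemidef.mpr (Matrix.posSemidef_conjTranspose_mul_self _))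
      (Matrix.nonneg_iff_posSemidef.mpr hkron)).mpr hsq
  have him1 := im_trace_eq_zero hPs.1
  have him2 := im_trace_eq_zero hQs.1
  rw [traceNorm_eq_sqrt, key, Matrix.trace_kronecker, Complex.mul_re, him1, him2]
  simp [traceNorm_eq_sqrt]
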